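/- Let ρ(z) = (z+1)^{1+β} - z^{1+β} - 1 with 0 < β < 1, and let r_*(y) = ((2^β - 1)ρ(y)/(ρ(2y) - ρ(y)))^{1/(1-β)}. Then r_*(y) < 1 for every y > 0; equivalently, ρ(2y) - ρ(y) > (2^β - 1)ρ(y) for all y > 0. -/

import Mathlib

open Real Set

private lemma midpoint_rpow {β : ℝ} (hβ0 : 0 < β) (hβ1 : β < 1) {a b : ℝ}
    (ha : 0 ≤ a) (hb : 0 ≤ b) (hab : a ≠ b) :
    a ^ β + b ^ β < 2 * ((a + b) / 2) ^ β := by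
  have h := (Real.strictConcaveOn_rpow hβ0 hβ1).2 (mem_Ici.2 ha) (mem_Ici.2 hb) hab
    (by norm_num : (0:ℝ) < 1/2) (by norm_num : (0:ℝ) < 1/2) (by norm_num)
  simp only [smul_eq_mul] at h
  have : (1/2 : ℝ) * a + (1/2) * b = (a + b) / 2 := by ring
  rw [this] at h
  linarith

private lemma hasDerivAt_shift (c d p : ℝ) (hp : 1 ≤ p) (x : ℝ) :
    HasDerivAt (fun t : ℝ => (c * t + d) ^ p) (p * (c * x + d) ^ (p - 1) * c) x := by
  have h1 : HasDerivAt (fun t : ℝ => c * t + d) c x := by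
    simpa using ((hasDerivAt_id x).const_mul c).add_const d
  exact (Real.hasDerivAt_rpow_const (Or.inr hp)).comp x h1

private lemma key_ineq {β : ℝ} (hβ0 : 0 < β) (hβ1 : β < 1) {y : ℝ} (hy : 0 < y) :
    (2:ℝ) ^ β * ((y + 1) ^ (1 + β) - y ^ (1 + β) - 1)
      < (2 * y + 1) ^ (1 + β) - (2 * y) ^ (1 + β) - 1 := by
  have hp : (1:ℝ) ≤ 1 + β := by linarith
  set F : ℝ → ℝ := fun t =>
    (2 * t + 1) ^ (1 + β) - (2 * t) ^ (1 + β) - 1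
      - (2:ℝ) ^ β * ((t + 1) ^ (1 + β) - t ^ (1 + β) - 1) with hF
  have hF' : ∀ x : ℝ, HasDerivAt F
      ((1 + β) * (2 * x + 1) ^ β * 2 - (1 + β) * (2 * x) ^ β * 2
        - (2:ℝ) ^ β * ((1 + β) * (x + 1) ^ β * 1 - (1 + β) * x ^ β * 1)) x := by
    intro x
    have h1 := hasDerivAt_shift 2 1 (1 + β) hp x
    have h2 := hasDerivAt_shift 2 0 (1 + β) hp x
    have h3 := hasDerivAt_shift 1 1 (1 + β) hp x
    have h4 := hasDerivAt_shift 1 0 (1 + β) hp x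
    simp only [add_zero, one_mul, add_sub_cancel_left] at h1 h2 h3 h4
    exact ((h1.sub h2).sub_const 1).sub ((((h3.sub h4).sub_const 1)).const_mul ((2:ℝ)^β))
  have hmono : StrictMonoOn F (Ici 0) := by
    apply strictMonoOn_of_deriv_pos (convex_Ici 0)
      (fun x _ => (hF' x).continuousAt.continuousWithinAt)
    intro x hx
    rw [interior_Ici] at hx
    rw [(hF' x).deriv]
    have hx0 : (0:ℝ) < x := hx
    have e1 : (2:ℝ) ^ β * (x + 1) ^ β = (2 * x + 2) ^ β := by
      rw [← Real.mul_rpow (by norm_num) (by linarith)]; ring_nf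
    have e2 : (2:ℝ) ^ β * x ^ β = (2 * x) ^ β := by
      rw [← Real.mul_rpow (by norm_num) hx0.le]
    have hmid : (2 * x) ^ β + (2 * x + 2) ^ β < 2 * (2 * x + 1) ^ β := by
      have := midpoint_rpow hβ0 hβ1 (by linarith : (0:ℝ) ≤ 2 * x)
        (by linarith : (0:ℝ) ≤ 2 * x + 2) (by linarith)
      have h2 : (2 * x + (2 * x + 2)) / 2 = 2 * x + 1 := by ring
      rwa [h2] at this
    nlinarith [hmid, e1, e2, hβ0]
  have h0 : F 0 = 0 := by
    simp [hF]
    norm_num [Real.zero_rpow (by positivity : (1:ℝ) + β ≠ 0), Real.one_rpow]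
  have := hmono (mem_Ici.2 (le_refl 0)) (mem_Ici.2 (le_of_lt hy)) hy
  rw [h0] at this
  simpa [hF] using this

private lemma rho_pos {β : ℝ} (hβ0 : 0 < β) (hβ1 : β < 1) {y : ℝ} (hy : 0 < y) :
    (0:ℝ) < (y + 1) ^ (1 + β) - y ^ (1 + β) - 1 := by
  have hp : (1:ℝ) ≤ 1 + β := by linarith
  set G : ℝ → ℝ := fun t => (t + 1) ^ (1 + β) - t ^ (1 + β) - 1 with hG
  have hG' : ∀ x : ℝ, HasDerivAt G
      ((1 + β) * (x + 1) ^ β * 1 - (1 + β) * x ^ β * 1) x := by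
    intro x
    have h3 := hasDerivAt_shift 1 1 (1 + β) hp x
    have h4 := hasDerivAt_shift 1 0 (1 + β) hp x
    simp only [add_zero, one_mul, add_sub_cancel_left] at h3 h4
    exact (h3.sub h4).sub_const 1
  have hmono : StrictMonoOn G (Ici 0) := by
    apply strictMonoOn_of_deriv_pos (convex_Ici 0)
      (fun x _ => (hG' x).continuousAt.continuousWithinAt)
    intro x hx
    rw [interior_Ici] at hx
    rw [(hG' x).deriv]
    have : x ^ β < (x + 1) ^ β := Real.rpow_lt_rpow (le_of_lt hx) (by linarith) hβ0
    nlinarith [hβ0]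
  have h0 : G 0 = 0 := by
    simp [hG, Real.zero_rpow (by positivity : (1:ℝ) + β ≠ 0)]
  have := hmono (mem_Ici.2 (le_refl 0)) (mem_Ici.2 (le_of_lt hy)) hy
  rw [h0] at this
  simpa [hG] using this

theorem rstar_lt_one (β : ℝ) (hβ0 : 0 < β) (hβ1 : β < 1)
    (ρ rstar : ℝ → ℝ)
    (hρ : ∀ z : ℝ, ρ z = (z + 1) ^ (1 + β) - z ^ (1 + β) - 1)
    (hr : ∀ y : ℝ,
      rstar y = (((2 : ℝ) ^ β - 1) * ρ y / (ρ (2 * y) - ρ y)) ^ (1 / (1 - β)))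
    (y : ℝ) (hy : 0 < y) :
    rstar y < 1 ∧ ((2 : ℝ) ^ β - 1) * ρ y < ρ (2 * y) - ρ y := by
  have hρy : 0 < ρ y := by rw [hρ]; exact rho_pos hβ0 hβ1 hy
  have hkey : (2:ℝ) ^ β * ρ y < ρ (2 * y) := by
    rw [hρ y, hρ (2*y)]; exact key_ineq hβ0 hβ1 hy
  have hineq : ((2:ℝ)^β - 1) * ρ y < ρ (2 * y) - ρ y := by nlinarith
  refine ⟨?_, hineq⟩
  have h2β : (1:ℝ) < (2:ℝ) ^ β :=
    (Real.one_lt_rpow_iff_of_pos (by norm_num : (0:ℝ) < 2)).2 (Or.inl ⟨one_lt_two, hβ0⟩)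
  have hnum : 0 < ((2:ℝ)^β - 1) * ρ y := by nlinarith
  have hden : 0 < ρ (2 * y) - ρ y := lt_trans hnum hineq
  rw [hr]
  apply Real.rpow_lt_one (le_of_lt (div_pos hnum hden))
  · rw [div_lt_one hden]; exact hineq
  · have : 0 < 1 - β := by linarith
    positivity
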